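/- (Pappus implies Gallucci.) Let K be a division ring. Suppose the Pappus property holds in ℙ³(K): for every pair of distinct coplanar lines ℓ, ℓ' of ℙ³(K), every three distinct points A, B, C on ℓ and every three distinct points A', B', C' on ℓ', none equal to the intersection point of ℓ and ℓ', the three points AB' ∩ A'B, AC' ∩ A'C, BC' ∩ B'C are collinear. Then the Gallucci property holds in ℙ³(K): for all pairwise skew lines a, b, c and pairwise skew lines e, f, g with each of e, f, g meeting each of a, b, c, every common transversal h of {a,b,c} meets every common transversal d of {e,f,g}. -/

import Mathlib

set_option maxHeartbeats 1000000

open Submodule Module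


/-- Three points (1-dimensional subspaces) of `ℙ³(K)` are collinear if they are contained in a
common 2-dimensional subspace of `K⁴`. -/
def Collinear3 {K : Type*} [DivisionRing K] (P Q R : Submodule K (Fin 4 → K)) : Prop :=
  ∃ W : Submodule K (Fin 4 → K), Module.finrank K W = 2 ∧ P ≤ W ∧ Q ≤ W ∧ R ≤ W

/-- The Pappus property in `ℙ³(K)`: for every pair of distinct coplanar lines `ℓ, ℓ'`, every
three distinct points `A, B, C` on `ℓ` and `A', B', C'` on `ℓ'` (none equal to the
intersection point of `ℓ` and `ℓ'`), the three points `AB' ∩ A'B`, `AC' ∩ A'C`, `BC' ∩ B'C`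
are collinear. -/
def PappusProperty (K : Type*) [DivisionRing K] : Prop :=
  ∀ l l' : Submodule K (Fin 4 → K),
    Module.finrank K l = 2 → Module.finrank K l' = 2 → l ≠ l' →
    (∃ W : Submodule K (Fin 4 → K), Module.finrank K W = 3 ∧ l ≤ W ∧ l' ≤ W) →
    ∀ A B C A' B' C' X Y Z : Submodule K (Fin 4 → K),
      Module.finrank K A = 1 → Module.finrank K B = 1 → Module.finrank K C = 1 →
      Module.finrank K A' = 1 → Module.finrank K B' = 1 → Module.finrank K C' = 1 →
      Module.finrank K X = 1 → Module.finrank K Y = 1 → Module.finrank K Z = 1 →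
      A ≤ l → B ≤ l → C ≤ l → A ≠ B → A ≠ C → B ≠ C →
      A' ≤ l' → B' ≤ l' → C' ≤ l' → A' ≠ B' → A' ≠ C' → B' ≠ C' →
      A ≠ l ⊓ l' → B ≠ l ⊓ l' → C ≠ l ⊓ l' →
      A' ≠ l ⊓ l' → B' ≠ l ⊓ l' → C' ≠ l ⊓ l' →
      X ≤ A ⊔ B' → X ≤ A' ⊔ B →
      Y ≤ A ⊔ C' → Y ≤ A' ⊔ C →
      Z ≤ B ⊔ C' → Z ≤ B' ⊔ C →
      Collinear3 X Y Z

/-- The Gallucci property in `ℙ³(K)`: for all pairwise skew lines `a, b, c` and pairwise skew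
lines `e, f, g` with each of `e, f, g` meeting each of `a, b, c`, every common transversal `h`
of `a, b, c` meets every common transversal `d` of `e, f, g`. -/
def GallucciProperty (K : Type*) [DivisionRing K] : Prop :=
  ∀ a b c e f g h d : Submodule K (Fin 4 → K),
    Module.finrank K a = 2 → Module.finrank K b = 2 → Module.finrank K c = 2 →
    Module.finrank K e = 2 → Module.finrank K f = 2 → Module.finrank K g = 2 →
    Module.finrank K h = 2 → Module.finrank K d = 2 →
    a ⊓ b = ⊥ → a ⊓ c = ⊥ → b ⊓ c = ⊥ →
    e ⊓ f = ⊥ → e ⊓ g = ⊥ → f ⊓ g = ⊥ →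
    e ⊓ a ≠ ⊥ → e ⊓ b ≠ ⊥ → e ⊓ c ≠ ⊥ →
    f ⊓ a ≠ ⊥ → f ⊓ b ≠ ⊥ → f ⊓ c ≠ ⊥ →
    g ⊓ a ≠ ⊥ → g ⊓ b ≠ ⊥ → g ⊓ c ≠ ⊥ →
    h ⊓ a ≠ ⊥ → h ⊓ b ≠ ⊥ → h ⊓ c ≠ ⊥ →
    d ⊓ e ≠ ⊥ → d ⊓ f ≠ ⊥ → d ⊓ g ≠ ⊥ →
    h ⊓ d ≠ ⊥

namespace PappusGallucci

variable {K : Type*} [DivisionRing K]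

abbrev V4 (K : Type*) [DivisionRing K] := Fin 4 → K

/-- Vector in the plane `x₃ = 0`. -/
def rowv (p q r : K) : V4 K := ![p, q, r, 0]

@[simp] lemma rowv_add (p q r p' q' r' : K) :
    rowv p q r + rowv p' q' r' = rowv (p+p') (q+q') (r+r') := by
  funext i; fin_cases i <;> simp [rowv]

@[simp] lemma rowv_smul (s p q r : K) : s • rowv p q r = rowv (s*p) (s*q) (s*r) := by
  funext i; fin_cases i <;> simp [rowv]

lemma rowv_eq_iff {p q r p' q' r' : K} :
    rowv p q r = rowv p' q' r' ↔ p = p' ∧ q = q' ∧ r = r' := by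
  constructor
  · intro h
    exact ⟨congrFun h 0, congrFun h 1, congrFun h 2⟩
  · rintro ⟨rfl, rfl, rfl⟩; rfl

lemma rowv_eq_zero_iff {p q r : K} : rowv p q r = 0 ↔ p = 0 ∧ q = 0 ∧ r = 0 := by
  have h0 : (0 : V4 K) = rowv 0 0 0 := by
    funext i; fin_cases i <;> simp [rowv]
  rw [h0, rowv_eq_iff]

lemma span_sup_span (u v : V4 K) :
    (span K {u} : Submodule K (V4 K)) ⊔ span K {v} = span K {u, v} := by
  rw [← Submodule.span_union, Set.singleton_union]

lemma range_pair (u v : V4 K) : Set.range ![u, v] = {u, v} := by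
  rw [Matrix.range_cons, Matrix.range_cons_empty, Set.singleton_union]

lemma finrank_span_pair {u v : V4 K} (h : LinearIndependent K ![u, v]) :
    Module.finrank K (span K ({u, v} : Set (V4 K))) = 2 := by
  have := finrank_span_eq_card h
  rwa [range_pair, Fintype.card_fin] at this

lemma key_algebra (a b β s t : K) (ha0 : a ≠ 0) (hb1 : b ≠ 1)
    (hβ : β = (1-a)*(1-b)⁻¹)
    (h1 : s + t*b = 1 + β*b) (h2 : s + t*(b*a⁻¹) = 1) (h3 : s + t = β) :
    a * (b-1)⁻¹ = (b-1)⁻¹ * a := by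
  have hb1' : b - 1 ≠ 0 := sub_ne_zero.mpr hb1
  have h1b : (1:K) - b ≠ 0 := sub_ne_zero.mpr (Ne.symm hb1)
  have hβ1 : β * (1-b) = 1 - a := by rw [hβ, mul_assoc, inv_mul_cancel₀ h1b, mul_one]
  have ht : t * (b-1) = a := by
    calc t*(b-1) = (s + t*b) - (s+t) := by noncomm_ring
    _ = (1 + β*b) - β := by rw [h1, h3]
    _ = 1 - β*(1-b) := by noncomm_ring
    _ = 1 - (1-a) := by rw [hβ1]
    _ = a := by noncomm_ring
  have ht2 : t * (b*a⁻¹ - 1) = 1 - β := by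
    calc t*(b*a⁻¹-1) = (s + t*(b*a⁻¹)) - (s+t) := by noncomm_ring
    _ = 1 - β := by rw [h2, h3]
  have hβ2 : (1:K) - β = (b-a)*(b-1)⁻¹ := by
    have hβ' : β = (a-1)*(b-1)⁻¹ := by
      rw [hβ, show (1:K)-b = -(b-1) by noncomm_ring, inv_neg]
      noncomm_ring
    rw [hβ']
    have h4 : (1:K) = (b-1)*(b-1)⁻¹ := (mul_inv_cancel₀ hb1').symm
    calc (1:K) - (a-1)*(b-1)⁻¹ = (b-1)*(b-1)⁻¹ - (a-1)*(b-1)⁻¹ := by rw [← h4]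
    _ = (b-a)*(b-1)⁻¹ := by noncomm_ring
  have htv : t = a * (b-1)⁻¹ := by
    rw [← ht, mul_assoc, mul_inv_cancel₀ hb1', mul_one]
  have h5 : a*(b-1)⁻¹*(b*a⁻¹) - a*(b-1)⁻¹ = b*(b-1)⁻¹ - a*(b-1)⁻¹ := by
    rw [htv, hβ2] at ht2
    calc a*(b-1)⁻¹*(b*a⁻¹) - a*(b-1)⁻¹ = a*(b-1)⁻¹ * (b*a⁻¹ - 1) := by noncomm_ring
    _ = (b-a)*(b-1)⁻¹ := ht2
    _ = b*(b-1)⁻¹ - a*(b-1)⁻¹ := by noncomm_ring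
  have h6 : a*(b-1)⁻¹*(b*a⁻¹) = b*(b-1)⁻¹ := sub_left_inj.mp h5
  have h7 : a*((b-1)⁻¹*b) = b*(b-1)⁻¹*a := by
    have h8 := congrArg (· * a) h6
    simpa [mul_assoc, inv_mul_cancel₀ ha0] using h8
  have hx : (b-1)⁻¹*b = 1 + (b-1)⁻¹ := by
    calc (b-1)⁻¹*b = (b-1)⁻¹*(b-1) + (b-1)⁻¹ := by noncomm_ring
    _ = 1 + (b-1)⁻¹ := by rw [inv_mul_cancel₀ hb1']
  have hy : b*(b-1)⁻¹ = 1 + (b-1)⁻¹ := by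
    calc b*(b-1)⁻¹ = (b-1)*(b-1)⁻¹ + (b-1)⁻¹ := by noncomm_ring
    _ = 1 + (b-1)⁻¹ := by rw [mul_inv_cancel₀ hb1']
  rw [hx, hy] at h7
  rw [mul_add, add_mul, mul_one, one_mul] at h7
  exact add_left_cancel h7

lemma finrank_ker_proj3 :
    Module.finrank K (LinearMap.ker (LinearMap.proj 3 : V4 K →ₗ[K] K)) = 3 := by
  have h := LinearMap.finrank_range_add_finrank_ker (LinearMap.proj 3 : V4 K →ₗ[K] K)
  have hr : LinearMap.range (LinearMap.proj 3 : V4 K →ₗ[K] K) = ⊤ :=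
    LinearMap.range_eq_top.mpr (fun cc => ⟨fun _ => cc, rfl⟩)
  rw [hr, finrank_top, Module.finrank_self, Module.finrank_fin_fun] at h
  omega

lemma key (hp : PappusProperty K) {a b : K} (ha0 : a ≠ 0) (ha1 : a ≠ 1)
    (hb0 : b ≠ 0) (hb1 : b ≠ 1) : a * (b-1)⁻¹ = (b-1)⁻¹ * a := by
  have h1b : (1:K) - b ≠ 0 := sub_ne_zero.mpr (Ne.symm hb1)
  set β : K := (1-a)*(1-b)⁻¹ with hβdef
  have hβ : β * (1-b) = 1 - a := by
    rw [hβdef, mul_assoc, inv_mul_cancel₀ h1b, mul_one]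
  -- the vectors
  set e1 : V4 K := rowv 1 0 0 with he1
  set vA : V4 K := rowv 0 1 0 with hvA
  set vB : V4 K := rowv 1 1 0 with hvB
  set vC : V4 K := rowv a 1 0 with hvC
  set vA' : V4 K := rowv 0 0 1 with hvA'
  set vB' : V4 K := rowv 1 0 1 with hvB'
  set vC' : V4 K := rowv b 0 1 with hvC'
  set vX : V4 K := rowv 1 1 1 with hvX
  set vY : V4 K := rowv b (b*a⁻¹) 1 with hvY
  set vZ : V4 K := rowv (1+β*b) 1 β with hvZ
  set l : Submodule K (V4 K) := span K {e1, vA} with hl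
  set l' : Submodule K (V4 K) := span K {e1, vA'} with hl'
  -- finranks of the lines
  have hrl : Module.finrank K l = 2 := by
    apply finrank_span_pair
    rw [LinearIndependent.pair_iff]
    intro s t hst
    rw [he1, hvA, rowv_smul, rowv_smul, rowv_add, rowv_eq_zero_iff] at hst
    simp only [mul_one, mul_zero, add_zero, zero_add] at hst
    exact ⟨hst.1, hst.2.1⟩
  have hrl' : Module.finrank K l' = 2 := by
    apply finrank_span_pair
    rw [LinearIndependent.pair_iff]
    intro s t hst
    rw [he1, hvA', rowv_smul, rowv_smul, rowv_add, rowv_eq_zero_iff] at hst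
    simp only [mul_one, mul_zero, add_zero, zero_add] at hst
    exact ⟨hst.1, hst.2.2⟩
  -- vA ∉ l'
  have hvAl' : vA ∉ l' := by
    intro hmem
    rw [hl', Submodule.mem_span_pair] at hmem
    obtain ⟨m, n, hmn⟩ := hmem
    rw [he1, hvA', hvA, rowv_smul, rowv_smul, rowv_add, rowv_eq_iff] at hmn
    simp only [mul_one, mul_zero, add_zero, zero_add] at hmn
    exact one_ne_zero hmn.2.1.symm
  have hll' : l ≠ l' := by
    intro he
    exact hvAl' (he ▸ Submodule.subset_span (by simp))
  -- coplanarity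
  have hcop : ∃ W : Submodule K (V4 K), Module.finrank K W = 3 ∧ l ≤ W ∧ l' ≤ W := by
    refine ⟨LinearMap.ker (LinearMap.proj 3 : V4 K →ₗ[K] K), ?_, ?_, ?_⟩
    · exact finrank_ker_proj3
    · rw [hl, span_le]
      rintro v (rfl | rfl) <;> simp [LinearMap.mem_ker, he1, hvA, rowv]
    · rw [hl', span_le]
      rintro v (rfl | rfl) <;> simp [LinearMap.mem_ker, he1, hvA', rowv]
  -- helper for distinctness of spans of single vectors
  have spne : ∀ u v : V4 K, (∀ m : K, m • v ≠ u) →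
      span K ({u} : Set (V4 K)) ≠ span K {v} := by
    intro u v hnm he
    have hu : u ∈ span K ({v} : Set (V4 K)) := he ▸ Submodule.mem_span_singleton_self u
    rw [Submodule.mem_span_singleton] at hu
    obtain ⟨m, hm⟩ := hu
    exact hnm m hm
  -- points
  set A : Submodule K (V4 K) := span K {vA} with hA
  set B : Submodule K (V4 K) := span K {vB} with hB
  set C : Submodule K (V4 K) := span K {vC} with hC
  set A' : Submodule K (V4 K) := span K {vA'} with hA'
  set B' : Submodule K (V4 K) := span K {vB'} with hB'
  set C' : Submodule K (V4 K) := span K {vC'} with hC'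
  set X : Submodule K (V4 K) := span K {vX} with hX
  set Y : Submodule K (V4 K) := span K {vY} with hY
  set Z : Submodule K (V4 K) := span K {vZ} with hZ
  -- finranks of points
  have hrA : Module.finrank K A = 1 := finrank_span_singleton
    (by rw [hvA, Ne, rowv_eq_zero_iff]; simp)
  have hrB : Module.finrank K B = 1 := finrank_span_singleton
    (by rw [hvB, Ne, rowv_eq_zero_iff]; simp)
  have hrC : Module.finrank K C = 1 := finrank_span_singleton
    (by rw [hvC, Ne, rowv_eq_zero_iff]; simp)
  have hrA' : Module.finrank K A' = 1 := finrank_span_singleton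
    (by rw [hvA', Ne, rowv_eq_zero_iff]; simp)
  have hrB' : Module.finrank K B' = 1 := finrank_span_singleton
    (by rw [hvB', Ne, rowv_eq_zero_iff]; simp)
  have hrC' : Module.finrank K C' = 1 := finrank_span_singleton
    (by rw [hvC', Ne, rowv_eq_zero_iff]; simp)
  have hrX : Module.finrank K X = 1 := finrank_span_singleton
    (by rw [hvX, Ne, rowv_eq_zero_iff]; simp)
  have hrY : Module.finrank K Y = 1 := finrank_span_singleton
    (by rw [hvY, Ne, rowv_eq_zero_iff]; simp)
  have hrZ : Module.finrank K Z = 1 := finrank_span_singleton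
    (by rw [hvZ, Ne, rowv_eq_zero_iff]; simp)
  -- incidences on the two lines
  have hAl : A ≤ l := by
    rw [hA, Submodule.span_singleton_le_iff_mem, hl]
    exact Submodule.subset_span (by simp)
  have hBl : B ≤ l := by
    rw [hB, Submodule.span_singleton_le_iff_mem, hl, Submodule.mem_span_pair]
    exact ⟨1, 1, by rw [he1, hvA, hvB, rowv_smul, rowv_smul, rowv_add, rowv_eq_iff]; norm_num⟩
  have hCl : C ≤ l := by
    rw [hC, Submodule.span_singleton_le_iff_mem, hl, Submodule.mem_span_pair]
    exact ⟨a, 1, by rw [he1, hvA, hvC, rowv_smul, rowv_smul, rowv_add, rowv_eq_iff]; norm_num⟩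
  have hA'l' : A' ≤ l' := by
    rw [hA', Submodule.span_singleton_le_iff_mem, hl']
    exact Submodule.subset_span (by simp)
  have hB'l' : B' ≤ l' := by
    rw [hB', Submodule.span_singleton_le_iff_mem, hl', Submodule.mem_span_pair]
    exact ⟨1, 1, by rw [he1, hvA', hvB', rowv_smul, rowv_smul, rowv_add, rowv_eq_iff]; norm_num⟩
  have hC'l' : C' ≤ l' := by
    rw [hC', Submodule.span_singleton_le_iff_mem, hl', Submodule.mem_span_pair]
    exact ⟨b, 1, by rw [he1, hvA', hvC', rowv_smul, rowv_smul, rowv_add, rowv_eq_iff]; norm_num⟩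
  -- distinctness of points
  have hAB : A ≠ B := by
    refine spne _ _ (fun m hm => ?_)
    rw [hvB, hvA, rowv_smul, rowv_eq_iff] at hm
    obtain ⟨h1, h2, -⟩ := hm
    rw [mul_one] at h1 h2
    exact one_ne_zero (h2.symm.trans h1)
  have hAC : A ≠ C := by
    refine spne _ _ (fun m hm => ?_)
    rw [hvC, hvA, rowv_smul, rowv_eq_iff] at hm
    obtain ⟨h1, h2, -⟩ := hm
    rw [mul_one] at h2
    rw [h2, one_mul] at h1
    exact ha0 h1
  have hBC : B ≠ C := by
    refine spne _ _ (fun m hm => ?_)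
    rw [hvC, hvB, rowv_smul, rowv_eq_iff] at hm
    obtain ⟨h1, h2, -⟩ := hm
    rw [mul_one] at h2
    rw [h2, one_mul] at h1
    exact ha1 h1
  have hA'B' : A' ≠ B' := by
    refine spne _ _ (fun m hm => ?_)
    rw [hvB', hvA', rowv_smul, rowv_eq_iff] at hm
    obtain ⟨h1, -, h3⟩ := hm
    rw [mul_one] at h1 h3
    exact one_ne_zero (h3.symm.trans h1)
  have hA'C' : A' ≠ C' := by
    refine spne _ _ (fun m hm => ?_)
    rw [hvC', hvA', rowv_smul, rowv_eq_iff] at hm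
    obtain ⟨h1, -, h3⟩ := hm
    rw [mul_one] at h3
    rw [h3, one_mul] at h1
    exact hb0 h1
  have hB'C' : B' ≠ C' := by
    refine spne _ _ (fun m hm => ?_)
    rw [hvC', hvB', rowv_smul, rowv_eq_iff] at hm
    obtain ⟨h1, -, h3⟩ := hm
    rw [mul_one] at h3
    rw [h3, one_mul] at h1
    exact hb1 h1
  -- points distinct from l ⊓ l'
  have notl' : ∀ p q r : K, q ≠ 0 → rowv p q r ∉ l' := by
    intro p q r hq hmem
    rw [hl', Submodule.mem_span_pair] at hmem
    obtain ⟨m, n, hmn⟩ := hmem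
    rw [he1, hvA', rowv_smul, rowv_smul, rowv_add, rowv_eq_iff] at hmn
    simp only [mul_one, mul_zero, add_zero, zero_add] at hmn
    exact hq hmn.2.1.symm
  have notl : ∀ p q r : K, r ≠ 0 → rowv p q r ∉ l := by
    intro p q r hr hmem
    rw [hl, Submodule.mem_span_pair] at hmem
    obtain ⟨m, n, hmn⟩ := hmem
    rw [he1, hvA, rowv_smul, rowv_smul, rowv_add, rowv_eq_iff] at hmn
    simp only [mul_one, mul_zero, add_zero, zero_add] at hmn
    exact hr hmn.2.2.symm
  have hinfr : ∀ u : V4 K, u ∉ l' → span K ({u} : Set (V4 K)) ≠ l ⊓ l' := by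
    intro u hu he
    have hm : u ∈ l ⊓ l' := he ▸ Submodule.mem_span_singleton_self u
    exact hu (Submodule.mem_inf.mp hm).2
  have hinfl : ∀ u : V4 K, u ∉ l → span K ({u} : Set (V4 K)) ≠ l ⊓ l' := by
    intro u hu he
    have hm : u ∈ l ⊓ l' := he ▸ Submodule.mem_span_singleton_self u
    exact hu (Submodule.mem_inf.mp hm).1
  have hAi : A ≠ l ⊓ l' := hA ▸ hinfr vA (hvA ▸ notl' 0 1 0 one_ne_zero)
  have hBi : B ≠ l ⊓ l' := hB ▸ hinfr vB (hvB ▸ notl' 1 1 0 one_ne_zero)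
  have hCi : C ≠ l ⊓ l' := hC ▸ hinfr vC (hvC ▸ notl' a 1 0 one_ne_zero)
  have hA'i : A' ≠ l ⊓ l' := hA' ▸ hinfl vA' (hvA' ▸ notl 0 0 1 one_ne_zero)
  have hB'i : B' ≠ l ⊓ l' := hB' ▸ hinfl vB' (hvB' ▸ notl 1 0 1 one_ne_zero)
  have hC'i : C' ≠ l ⊓ l' := hC' ▸ hinfl vC' (hvC' ▸ notl b 0 1 one_ne_zero)
  -- the intersection points
  have hX1 : X ≤ A ⊔ B' := by
    rw [hX, hA, hB', span_sup_span, Submodule.span_singleton_le_iff_mem,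
      Submodule.mem_span_pair]
    exact ⟨1, 1, by rw [hvA, hvB', hvX, rowv_smul, rowv_smul, rowv_add, rowv_eq_iff]; norm_num⟩
  have hX2 : X ≤ A' ⊔ B := by
    rw [hX, hA', hB, span_sup_span, Submodule.span_singleton_le_iff_mem,
      Submodule.mem_span_pair]
    exact ⟨1, 1, by rw [hvA', hvB, hvX, rowv_smul, rowv_smul, rowv_add, rowv_eq_iff]; norm_num⟩
  have hY1 : Y ≤ A ⊔ C' := by
    rw [hY, hA, hC', span_sup_span, Submodule.span_singleton_le_iff_mem,
      Submodule.mem_span_pair]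
    exact ⟨b*a⁻¹, 1, by
      rw [hvA, hvC', hvY, rowv_smul, rowv_smul, rowv_add, rowv_eq_iff]; norm_num⟩
  have hY2 : Y ≤ A' ⊔ C := by
    rw [hY, hA', hC, span_sup_span, Submodule.span_singleton_le_iff_mem,
      Submodule.mem_span_pair]
    refine ⟨1, b*a⁻¹, by
      rw [hvA', hvC, hvY, rowv_smul, rowv_smul, rowv_add, rowv_eq_iff]
      refine ⟨?_, by norm_num, by norm_num⟩
      rw [mul_assoc, inv_mul_cancel₀ ha0, mul_one, one_mul, zero_add]⟩
  have hZ1 : Z ≤ B ⊔ C' := by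
    rw [hZ, hB, hC', span_sup_span, Submodule.span_singleton_le_iff_mem,
      Submodule.mem_span_pair]
    exact ⟨1, β, by rw [hvB, hvC', hvZ, rowv_smul, rowv_smul, rowv_add, rowv_eq_iff]; norm_num⟩
  have hZ2 : Z ≤ B' ⊔ C := by
    rw [hZ, hB', hC, span_sup_span, Submodule.span_singleton_le_iff_mem,
      Submodule.mem_span_pair]
    refine ⟨β, 1, by
      rw [hvB', hvC, hvZ, rowv_smul, rowv_smul, rowv_add, rowv_eq_iff]
      refine ⟨?_, by norm_num, by norm_num⟩
      rw [one_mul]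
      calc β * 1 + a = (1 + β*b) + ((β - β*b) - (1 - a)) := by noncomm_ring
      _ = (1 + β*b) + ((β*(1-b)) - (1 - a)) := by noncomm_ring
      _ = 1 + β*b := by rw [hβ]; noncomm_ring⟩
  -- apply Pappus
  obtain ⟨W2, hrW2, hXW2, hYW2, hZW2⟩ :=
    hp l l' hrl hrl' hll' hcop A B C A' B' C' X Y Z
      hrA hrB hrC hrA' hrB' hrC' hrX hrY hrZ
      hAl hBl hCl hAB hAC hBC hA'l' hB'l' hC'l' hA'B' hA'C' hB'C'
      hAi hBi hCi hA'i hB'i hC'i hX1 hX2 hY1 hY2 hZ1 hZ2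
  -- extract linear dependence
  have hxW : vX ∈ W2 := hXW2 (hX ▸ Submodule.mem_span_singleton_self vX)
  have hyW : vY ∈ W2 := hYW2 (hY ▸ Submodule.mem_span_singleton_self vY)
  have hzW : vZ ∈ W2 := hZW2 (hZ ▸ Submodule.mem_span_singleton_self vZ)
  have hindXY : LinearIndependent K ![vX, vY] := by
    rw [LinearIndependent.pair_iff]
    intro s t hst
    rw [hvX, hvY, rowv_smul, rowv_smul, rowv_add, rowv_eq_zero_iff] at hst
    simp only [mul_one] at hst
    obtain ⟨hc1, -, hc3⟩ := hst
    have ht : t * (b - 1) = 0 := by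
      calc t * (b-1) = (s + t*b) - (s + t) := by noncomm_ring
      _ = 0 := by rw [hc1, hc3, sub_zero]
    have ht0 : t = 0 := by
      rcases mul_eq_zero.mp ht with h | h
      · exact h
      · exact absurd h (sub_ne_zero.mpr hb1)
    refine ⟨?_, ht0⟩
    rw [ht0, add_zero] at hc3
    exact hc3
  have hspanW : span K ({vX, vY} : Set (V4 K)) = W2 := by
    apply Submodule.eq_of_le_of_finrank_le
    · rw [span_le]
      rintro v (rfl | rfl)
      exacts [hxW, hyW]
    · rw [hrW2, finrank_span_pair hindXY]
  have hzmem : vZ ∈ span K ({vX, vY} : Set (V4 K)) := hspanW ▸ hzW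
  rw [Submodule.mem_span_pair] at hzmem
  obtain ⟨s, t, hst⟩ := hzmem
  rw [hvX, hvY, hvZ, rowv_smul, rowv_smul, rowv_add, rowv_eq_iff] at hst
  simp only [mul_one] at hst
  obtain ⟨hc1, hc2, hc3⟩ := hst
  exact key_algebra a b β s t ha0 hb1 hβdef hc1 hc2 hc3



lemma mul_comm_of_pappus (hp : PappusProperty K) : ∀ p q : K, p * q = q * p := by
  intro p q
  by_cases hp0 : p = 0
  · rw [hp0, zero_mul, mul_zero]
  by_cases hp1 : p = 1
  · rw [hp1, one_mul, mul_one]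
  by_cases hq0 : q = 0
  · rw [hq0, zero_mul, mul_zero]
  by_cases hqm : q = -1
  · rw [hqm, mul_neg_one, neg_one_mul]
  have hb1 : q⁻¹ + 1 ≠ 1 := by
    intro h
    have : q⁻¹ = 0 := by
      have h2 := congrArg (fun z => z - 1) h
      simpa using h2
    exact hq0 (inv_eq_zero.mp this)
  have hb0 : q⁻¹ + 1 ≠ 0 := by
    intro h
    have h2 : q⁻¹ = -1 := eq_neg_of_add_eq_zero_left h
    have : q = -1 := by
      rw [← inv_inv q, h2, inv_neg, inv_one]
    exact hqm this
  have hbq : (q⁻¹ + 1 - 1)⁻¹ = q := by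
    rw [add_sub_cancel_right, inv_inv]
  have hkey := key hp hp0 hp1 hb0 hb1
  rw [hbq] at hkey
  exact hkey

section Part2

lemma pair_indep_of_disjoint {p q : Submodule K (V4 K)} (hpq : p ⊓ q = ⊥)
    {u v : V4 K} (hu : u ∈ p) (hv : v ∈ q) (hu0 : u ≠ 0) (hv0 : v ≠ 0) :
    LinearIndependent K ![u, v] := by
  rw [LinearIndependent.pair_iff]
  intro s t hst
  have h1 : s • u ∈ p ⊓ q := by
    refine ⟨smul_mem _ _ hu, ?_⟩
    have h2 : s • u = -(t • v) := by
      rw [eq_neg_iff_add_eq_zero]; exact hst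
    rw [h2]; exact neg_mem (smul_mem _ _ hv)
  rw [hpq, Submodule.mem_bot, smul_eq_zero] at h1
  have hs : s = 0 := h1.resolve_right hu0
  subst hs
  rw [zero_smul, zero_add, smul_eq_zero] at hst
  exact ⟨rfl, hst.resolve_right hv0⟩

lemma directsum_eq {p q : Submodule K (V4 K)} (hpq : p ⊓ q = ⊥)
    {v v' w w' : V4 K} (hv : v ∈ p) (hv' : v' ∈ p) (hw : w ∈ q) (hw' : w' ∈ q)
    (heq : v + w = v' + w') : v = v' ∧ w = w' := by
  have hm : v - v' ∈ p ⊓ q := by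
    refine ⟨sub_mem hv hv', ?_⟩
    have h2 : v - v' = w' - w := by
      have h3 : v + w - (v' + w) = v' + w' - (v' + w) := by rw [heq]
      abel_nf at h3 ⊢
      exact h3
    rw [h2]; exact sub_mem hw' hw
  rw [hpq, Submodule.mem_bot, sub_eq_zero] at hm
  refine ⟨hm, ?_⟩
  rw [hm] at heq
  exact add_left_cancel heq

lemma pair_eq_coeff {u v : V4 K} (hind : LinearIndependent K ![u, v]) {s t s' t' : K}
    (heq : s • u + t • v = s' • u + t' • v) : s = s' ∧ t = t' := by
  have h2 := LinearIndependent.pair_iff.mp hind (s - s') (t - t') (by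
    rw [sub_smul, sub_smul]
    calc s • u - s' • u + (t • v - t' • v)
        = (s • u + t • v) - (s' • u + t' • v) := by abel
    _ = 0 := by rw [heq, sub_self])
  exact ⟨sub_eq_zero.mp h2.1, sub_eq_zero.mp h2.2⟩

lemma gallucci_of_comm (comm : ∀ x y : K, x * y = y * x) : GallucciProperty K := by
  intro a b c e f g h d ha2 hb2 hc2 he2 hf2 hg2 hh2 hd2 hab hac hbc hef heg hfg
    hea heb hec hfa hfb hfc hga hgb hgc hha hhb hhc hde hdf hdg
  have hV : Module.finrank K (V4 K) = 4 := Module.finrank_fin_fun K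
  have htop : a ⊔ b = ⊤ := by
    apply Submodule.eq_top_of_finrank_eq
    have hsum := Submodule.finrank_sup_add_finrank_inf_eq a b
    rw [hab, finrank_bot, add_zero, ha2, hb2] at hsum
    rw [hsum, hV]
  have hcompl : IsCompl a b := ⟨disjoint_iff.mpr hab, codisjoint_iff.mpr htop⟩
  set π := Submodule.linearProjOfIsCompl a b hcompl with hπdef
  set ρ : c →ₗ[K] a := π.comp c.subtype with hρdef
  have hρinj : Function.Injective ρ := by
    rw [injective_iff_map_eq_zero]
    intro x hx
    have hxb : (x : V4 K) ∈ b :=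
      (Submodule.linearProjOfIsCompl_apply_eq_zero_iff hcompl).mp hx
    have hbcx : (x : V4 K) ∈ b ⊓ c := ⟨hxb, x.2⟩
    rw [hbc, Submodule.mem_bot] at hbcx
    exact Subtype.ext hbcx
  have hfr : Module.finrank K c = Module.finrank K a := by rw [hc2, ha2]
  have hρsurj : Function.Surjective ρ :=
    (LinearMap.injective_iff_surjective_of_finrank_eq_finrank hfr).mp hρinj
  set σ := LinearEquiv.ofBijective ρ ⟨hρinj, hρsurj⟩ with hσdef
  set θ : V4 K →ₗ[K] V4 K := c.subtype ∘ₗ (σ.symm : a →ₗ[K] c) ∘ₗ π with hθdef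
  have hθapp : ∀ v : V4 K, θ v = ((σ.symm (π v) : c) : V4 K) := fun v => rfl
  have hθc : ∀ v : V4 K, θ v ∈ c := fun v => (σ.symm (π v)).2
  have hθinj0 : ∀ u ∈ a, θ u = 0 → u = 0 := by
    intro u hu h0
    rw [hθapp] at h0
    have h1 : σ.symm (π u) = 0 := Subtype.ext h0
    have h2 : π u = 0 := by
      have := congrArg σ h1
      rw [LinearEquiv.apply_symm_apply, map_zero] at this
      exact this
    have h3 : u ∈ b := (Submodule.linearProjOfIsCompl_apply_eq_zero_iff hcompl).mp h2
    have h4 : u ∈ a ⊓ b := ⟨hu, h3⟩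
    rw [hab, Submodule.mem_bot] at h4
    exact h4
  have hθz : ∀ z : V4 K, (hz : z ∈ c) → θ ((π z : a) : V4 K) = z := by
    intro z hz
    have h1 : π ((π z : a) : V4 K) = π z :=
      Submodule.linearProjOfIsCompl_apply_left hcompl (π z)
    rw [hθapp, h1]
    have h2 : σ ⟨z, hz⟩ = π z := rfl
    have h3 : σ.symm (π z) = ⟨z, hz⟩ := by
      rw [← h2, LinearEquiv.symm_apply_apply]
    rw [h3]
  -- every common transversal of a, b, c is of the form span {u, θ u}
  have lemB : ∀ m : Submodule K (V4 K), Module.finrank K m = 2 →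
      m ⊓ a ≠ ⊥ → m ⊓ b ≠ ⊥ → m ⊓ c ≠ ⊥ →
      ∃ u, u ∈ a ∧ u ≠ 0 ∧ m = span K {u, θ u} := by
    intro m hm2 hma hmb hmc
    obtain ⟨u, hu, hu0⟩ := Submodule.exists_mem_ne_zero_of_ne_bot hma
    obtain ⟨w, hw, hw0⟩ := Submodule.exists_mem_ne_zero_of_ne_bot hmb
    obtain ⟨z, hz, hz0⟩ := Submodule.exists_mem_ne_zero_of_ne_bot hmc
    have hua : u ∈ a := (Submodule.mem_inf.mp hu).2
    have hum : u ∈ m := (Submodule.mem_inf.mp hu).1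
    have hwb : w ∈ b := (Submodule.mem_inf.mp hw).2
    have hwm : w ∈ m := (Submodule.mem_inf.mp hw).1
    have hzc : z ∈ c := (Submodule.mem_inf.mp hz).2
    have hzm : z ∈ m := (Submodule.mem_inf.mp hz).1
    have hindep : LinearIndependent K ![u, w] := pair_indep_of_disjoint hab hua hwb hu0 hw0
    have hmspan : m = span K {u, w} := by
      refine (Submodule.eq_of_le_of_finrank_le ?_ ?_).symm
      · rw [span_le]
        rintro v (rfl | rfl)
        exacts [hum, hwm]
      · rw [hm2, finrank_span_pair hindep]
    obtain ⟨α, β, hαβ⟩ := Submodule.mem_span_pair.mp (hmspan ▸ hzm)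
    have h1 : π u = ⟨u, hua⟩ := Submodule.linearProjOfIsCompl_apply_left hcompl ⟨u, hua⟩
    have h2 : π w = 0 := Submodule.linearProjOfIsCompl_apply_right' hcompl hwb
    have hπz : ((π z : a) : V4 K) = α • u := by
      calc ((π z : a) : V4 K) = ((π (α • u + β • w) : a) : V4 K) := by rw [hαβ]
      _ = α • ((π u : a) : V4 K) + β • ((π w : a) : V4 K) := by
          rw [map_add, map_smul, map_smul]; rfl
      _ = α • u := by rw [h1, h2]; simp
    have hztheta : z = α • θ u := by
      have h3 : θ ((π z : a) : V4 K) = z := hθz z hzc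
      rw [hπz] at h3
      rw [← h3, map_smul]
    have hα0 : α ≠ 0 := fun h0 => hz0 (by rw [hztheta, h0, zero_smul])
    have hθu0 : θ u ≠ 0 := fun h0 => hz0 (by rw [hztheta, h0, smul_zero])
    refine ⟨u, hua, hu0, ?_⟩
    have hind2 : LinearIndependent K ![u, θ u] :=
      pair_indep_of_disjoint hac hua (hθc u) hu0 hθu0
    refine (Submodule.eq_of_le_of_finrank_le ?_ ?_).symm
    · rw [span_le]
      rintro v (rfl | rfl)
      · exact hum
      · have hθα : θ u = α⁻¹ • z := by
          rw [hztheta, smul_smul, inv_mul_cancel₀ hα0, one_smul]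
        rw [hθα]
        exact Submodule.smul_mem _ _ hzm
    · rw [hm2, finrank_span_pair hind2]
  obtain ⟨u1, hu1a, hu10, hespan⟩ := lemB e he2 hea heb hec
  obtain ⟨u2, hu2a, hu20, hfspan⟩ := lemB f hf2 hfa hfb hfc
  obtain ⟨u3, hu3a, hu30, hgspan⟩ := lemB g hg2 hga hgb hgc
  obtain ⟨u0, hu0a, hu00, hhspan⟩ := lemB h hh2 hha hhb hhc
  have hind12 : LinearIndependent K ![u1, u2] := by
    rw [LinearIndependent.pair_iff]
    intro s t hst
    by_cases ht : t = 0
    · subst ht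
      rw [zero_smul, add_zero, smul_eq_zero] at hst
      exact ⟨hst.resolve_right hu10, rfl⟩
    · exfalso
      have hu2e : u2 ∈ e := by
        have hc2' : u2 = (-(t⁻¹ * s)) • u1 := by
          calc u2 = t⁻¹ • (t • u2) := by rw [smul_smul, inv_mul_cancel₀ ht, one_smul]
          _ = t⁻¹ • (-(s • u1)) := by rw [eq_neg_of_add_eq_zero_right hst]
          _ = (-(t⁻¹ * s)) • u1 := by rw [smul_neg, smul_smul, neg_smul]
        rw [hc2', hespan]
        exact Submodule.smul_mem _ _ (Submodule.subset_span (by simp))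
      have hu2f : u2 ∈ f := hfspan ▸ Submodule.subset_span (by simp)
      have hmem : u2 ∈ e ⊓ f := ⟨hu2e, hu2f⟩
      rw [hef, Submodule.mem_bot] at hmem
      exact hu20 hmem
  have haspan : a = span K {u1, u2} := by
    refine (Submodule.eq_of_le_of_finrank_le ?_ ?_).symm
    · rw [span_le]
      rintro v (rfl | rfl)
      exacts [hu1a, hu2a]
    · rw [ha2, finrank_span_pair hind12]
  obtain ⟨l1, l2, hu3c⟩ := Submodule.mem_span_pair.mp (haspan ▸ hu3a)
  obtain ⟨c1, c2, hu0c⟩ := Submodule.mem_span_pair.mp (haspan ▸ hu0a)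
  have hl1 : l1 ≠ 0 := by
    intro h0
    rw [h0, zero_smul, zero_add] at hu3c
    have hu3f : u3 ∈ f := by
      rw [hfspan, ← hu3c]
      exact Submodule.smul_mem _ _ (Submodule.subset_span (by simp))
    have hu3g : u3 ∈ g := hgspan ▸ Submodule.subset_span (by simp)
    have hmem : u3 ∈ f ⊓ g := ⟨hu3f, hu3g⟩
    rw [hfg, Submodule.mem_bot] at hmem
    exact hu30 hmem
  have hl2 : l2 ≠ 0 := by
    intro h0
    rw [h0, zero_smul, add_zero] at hu3c
    have hu3e : u3 ∈ e := by
      rw [hespan, ← hu3c]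
      exact Submodule.smul_mem _ _ (Submodule.subset_span (by simp))
    have hu3g : u3 ∈ g := hgspan ▸ Submodule.subset_span (by simp)
    have hmem : u3 ∈ e ⊓ g := ⟨hu3e, hu3g⟩
    rw [heg, Submodule.mem_bot] at hmem
    exact hu30 hmem
  -- points of d on e, f, g
  obtain ⟨p1, hp1m, hp10⟩ := Submodule.exists_mem_ne_zero_of_ne_bot hde
  obtain ⟨p2, hp2m, hp20⟩ := Submodule.exists_mem_ne_zero_of_ne_bot hdf
  obtain ⟨p3, hp3m, hp30⟩ := Submodule.exists_mem_ne_zero_of_ne_bot hdg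
  have hp1d : p1 ∈ d := (Submodule.mem_inf.mp hp1m).1
  have hp1e : p1 ∈ e := (Submodule.mem_inf.mp hp1m).2
  have hp2d : p2 ∈ d := (Submodule.mem_inf.mp hp2m).1
  have hp2f : p2 ∈ f := (Submodule.mem_inf.mp hp2m).2
  have hp3d : p3 ∈ d := (Submodule.mem_inf.mp hp3m).1
  have hp3g : p3 ∈ g := (Submodule.mem_inf.mp hp3m).2
  obtain ⟨α1, β1, hp1c⟩ := Submodule.mem_span_pair.mp (hespan ▸ hp1e)
  obtain ⟨α2, β2, hp2c⟩ := Submodule.mem_span_pair.mp (hfspan ▸ hp2f)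
  obtain ⟨α3, β3, hp3c⟩ := Submodule.mem_span_pair.mp (hgspan ▸ hp3g)
  have hindp : LinearIndependent K ![p1, p2] :=
    pair_indep_of_disjoint hef hp1e hp2f hp10 hp20
  have hdspan : d = span K {p1, p2} := by
    refine (Submodule.eq_of_le_of_finrank_le ?_ ?_).symm
    · rw [span_le]
      rintro v (rfl | rfl)
      exacts [hp1d, hp2d]
    · rw [hd2, finrank_span_pair hindp]
  obtain ⟨x, y, hxy⟩ := Submodule.mem_span_pair.mp (hdspan ▸ hp3d)
  have hindθ : LinearIndependent K ![θ u1, θ u2] := by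
    rw [LinearIndependent.pair_iff]
    intro s t hst
    have h1 : θ (s • u1 + t • u2) = 0 := by
      rw [map_add, map_smul, map_smul]; exact hst
    have h2 : s • u1 + t • u2 = 0 :=
      hθinj0 _ (add_mem (smul_mem _ _ hu1a) (smul_mem _ _ hu2a)) h1
    exact LinearIndependent.pair_iff.mp hind12 s t h2
  have hgrand : ((x*α1) • u1 + (y*α2) • u2) + ((x*β1) • θ u1 + (y*β2) • θ u2)
      = ((α3*l1) • u1 + (α3*l2) • u2) + ((β3*l1) • θ u1 + (β3*l2) • θ u2) := by
    calc ((x*α1) • u1 + (y*α2) • u2) + ((x*β1) • θ u1 + (y*β2) • θ u2)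
        = x • p1 + y • p2 := by
          rw [← hp1c, ← hp2c, smul_add, smul_add, smul_smul, smul_smul, smul_smul, smul_smul]
          abel
    _ = p3 := hxy
    _ = α3 • u3 + β3 • θ u3 := hp3c.symm
    _ = ((α3*l1) • u1 + (α3*l2) • u2) + ((β3*l1) • θ u1 + (β3*l2) • θ u2) := by
          rw [← hu3c, map_add, map_smul, map_smul, smul_add, smul_add,
            smul_smul, smul_smul, smul_smul, smul_smul]
          try abel
  obtain ⟨hAeq, hCeq⟩ := directsum_eq hac
    (add_mem (smul_mem _ _ hu1a) (smul_mem _ _ hu2a))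
    (add_mem (smul_mem _ _ hu1a) (smul_mem _ _ hu2a))
    (add_mem (smul_mem _ _ (hθc u1)) (smul_mem _ _ (hθc u2)))
    (add_mem (smul_mem _ _ (hθc u1)) (smul_mem _ _ (hθc u2))) hgrand
  obtain ⟨E1, E2⟩ := pair_eq_coeff hind12 hAeq
  obtain ⟨E3, E4⟩ := pair_eq_coeff hindθ hCeq
  have hp3ne : ¬(α3 = 0 ∧ β3 = 0) := by
    rintro ⟨hh1, hh2⟩
    rw [hh1, hh2, zero_smul, zero_smul, add_zero] at hp3c
    exact hp30 hp3c.symm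
  have hx0 : x ≠ 0 := by
    intro h0
    rw [h0, zero_mul] at E1 E3
    exact hp3ne ⟨(mul_eq_zero.mp E1.symm).resolve_right hl1,
      (mul_eq_zero.mp E3.symm).resolve_right hl1⟩
  have hy0 : y ≠ 0 := by
    intro h0
    rw [h0, zero_mul] at E2 E4
    exact hp3ne ⟨(mul_eq_zero.mp E2.symm).resolve_right hl2,
      (mul_eq_zero.mp E4.symm).resolve_right hl2⟩
  -- the common point of h and d
  have key1 : (c1 * l1⁻¹ * x) * α1 = α3 * c1 := by
    calc (c1 * l1⁻¹ * x) * α1 = c1 * (l1⁻¹ * (x * α1)) := by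
          rw [mul_assoc, mul_assoc]
    _ = c1 * (l1⁻¹ * (l1 * α3)) := by rw [E1, comm α3 l1]
    _ = c1 * α3 := by rw [← mul_assoc l1⁻¹, inv_mul_cancel₀ hl1, one_mul]
    _ = α3 * c1 := comm c1 α3
  have key3 : (c1 * l1⁻¹ * x) * β1 = β3 * c1 := by
    calc (c1 * l1⁻¹ * x) * β1 = c1 * (l1⁻¹ * (x * β1)) := by
          rw [mul_assoc, mul_assoc]
    _ = c1 * (l1⁻¹ * (l1 * β3)) := by rw [E3, comm β3 l1]
    _ = c1 * β3 := by rw [← mul_assoc l1⁻¹, inv_mul_cancel₀ hl1, one_mul]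
    _ = β3 * c1 := comm c1 β3
  have key2 : (c2 * l2⁻¹ * y) * α2 = α3 * c2 := by
    calc (c2 * l2⁻¹ * y) * α2 = c2 * (l2⁻¹ * (y * α2)) := by
          rw [mul_assoc, mul_assoc]
    _ = c2 * (l2⁻¹ * (l2 * α3)) := by rw [E2, comm α3 l2]
    _ = c2 * α3 := by rw [← mul_assoc l2⁻¹, inv_mul_cancel₀ hl2, one_mul]
    _ = α3 * c2 := comm c2 α3
  have key4 : (c2 * l2⁻¹ * y) * β2 = β3 * c2 := by
    calc (c2 * l2⁻¹ * y) * β2 = c2 * (l2⁻¹ * (y * β2)) := by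
          rw [mul_assoc, mul_assoc]
    _ = c2 * (l2⁻¹ * (l2 * β3)) := by rw [E4, comm β3 l2]
    _ = c2 * β3 := by rw [← mul_assoc l2⁻¹, inv_mul_cancel₀ hl2, one_mul]
    _ = β3 * c2 := comm c2 β3
  have hq : (c1 * l1⁻¹ * x) • p1 + (c2 * l2⁻¹ * y) • p2 = α3 • u0 + β3 • θ u0 := by
    calc (c1 * l1⁻¹ * x) • p1 + (c2 * l2⁻¹ * y) • p2
        = (((c1 * l1⁻¹ * x)*α1) • u1 + ((c2 * l2⁻¹ * y)*α2) • u2)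
          + (((c1 * l1⁻¹ * x)*β1) • θ u1 + ((c2 * l2⁻¹ * y)*β2) • θ u2) := by
          rw [← hp1c, ← hp2c, smul_add, smul_add, smul_smul, smul_smul, smul_smul, smul_smul]
          abel
    _ = ((α3*c1) • u1 + (α3*c2) • u2) + ((β3*c1) • θ u1 + (β3*c2) • θ u2) := by
          rw [key1, key2, key3, key4]
    _ = α3 • u0 + β3 • θ u0 := by
          rw [← hu0c, map_add, map_smul, map_smul, smul_add, smul_add,
            smul_smul, smul_smul, smul_smul, smul_smul]
          try abel
  have hqh : α3 • u0 + β3 • θ u0 ∈ h := by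
    rw [hhspan]
    exact add_mem (Submodule.smul_mem _ _ (Submodule.subset_span (by simp)))
      (Submodule.smul_mem _ _ (Submodule.subset_span (by simp)))
  have hqd : α3 • u0 + β3 • θ u0 ∈ d := by
    rw [hdspan, ← hq]
    exact add_mem (Submodule.smul_mem _ _ (Submodule.subset_span (by simp)))
      (Submodule.smul_mem _ _ (Submodule.subset_span (by simp)))
  have hq0 : α3 • u0 + β3 • θ u0 ≠ 0 := by
    intro h0
    have h0' : α3 • u0 + β3 • θ u0 = 0 + 0 := by rw [h0, add_zero]
    obtain ⟨hα, hβ⟩ := directsum_eq hac (smul_mem _ α3 hu0a) (zero_mem a)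
      (smul_mem _ β3 (hθc u0)) (zero_mem c) h0'
    apply hp3ne
    constructor
    · exact (smul_eq_zero.mp hα).resolve_right hu00
    · have h1 : θ (β3 • u0) = 0 := by rw [map_smul]; exact hβ
      have h2 : β3 • u0 = 0 := hθinj0 _ (smul_mem _ _ hu0a) h1
      exact (smul_eq_zero.mp h2).resolve_right hu00
  intro hbot
  have hmem : α3 • u0 + β3 • θ u0 ∈ h ⊓ d := ⟨hqh, hqd⟩
  rw [hbot, Submodule.mem_bot] at hmem
  exact hq0 hmem

end Part2


end PappusGallucci

/-- Pappus implies Gallucci in `ℙ³(K)` over a division ring `K`. -/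
theorem pappus_implies_gallucci (K : Type*) [DivisionRing K]
    (hpappus : PappusProperty K) : GallucciProperty K :=
  PappusGallucci.gallucci_of_comm (PappusGallucci.mul_comm_of_pappus hpappus)
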